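/- Let α > 1, K ≥ 2 an integer, i* ∈ {1,…,K}, and λ ∈ [0,∞)^K with λ_{i*} = 0 and ∑_{j≠i*} (2^{1/α}+λ_j)^{-α} ≤ 1/2. Then ∫_1^∞ α z^{-(α+1)} ∏_{j≠i*} (1 − (z+λ_j)^{-α}) dz ≥ 1/(2e). -/

import Mathlib

open MeasureTheory Set

/-- Weierstrass product inequality. -/
lemma weierstrass_prod {ι : Type*} (s : Finset ι) (f : ι → ℝ)
    (h0 : ∀ i ∈ s, 0 ≤ f i) (h1 : ∀ i ∈ s, f i ≤ 1) :
    1 - ∑ i ∈ s, f i ≤ ∏ i ∈ s, (1 - f i) := by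
  classical
  induction s using Finset.induction_on with
  | empty => simp
  | @insert a s hx ih =>
    rw [Finset.sum_insert hx, Finset.prod_insert hx]
    have h0' : ∀ i ∈ s, 0 ≤ f i := fun i hi => h0 i (Finset.mem_insert_of_mem hi)
    have h1' : ∀ i ∈ s, f i ≤ 1 := fun i hi => h1 i (Finset.mem_insert_of_mem hi)
    have ha0 := h0 a (Finset.mem_insert_self a s)
    have ha1 := h1 a (Finset.mem_insert_self a s)
    have hsum : 0 ≤ ∑ i ∈ s, f i := Finset.sum_nonneg h0'
    have := ih h0' h1'
    nlinarith [this, mul_nonneg ha0 hsum]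

/-- on the event `D_t`, the FTPL exploitation probability of the optimal arm
is at least `1/(2e)`. -/
theorem ftpl_pareto_prob_lower_bound_optimal
    (α : ℝ) (hα : 1 < α) (K : ℕ) (hK : 2 ≤ K) (istar : Fin K)
    (lam : Fin K → ℝ) (hlam : ∀ j, 0 ≤ lam j) (hstar : lam istar = 0)
    (hD : ∑ j ∈ Finset.univ.erase istar, ((2 : ℝ) ^ (1 / α) + lam j) ^ (-α) ≤ 1 / 2) :
    1 / (2 * Real.exp 1)
      ≤ ∫ z in Set.Ioi (1 : ℝ),
          α * z ^ (-(α + 1)) *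
            ∏ j ∈ Finset.univ.erase istar, (1 - (z + lam j) ^ (-α)) := by
  classical
  have hα0 : (0 : ℝ) < α := by linarith
  set c : ℝ := (2 : ℝ) ^ (1 / α) with hcdef
  have hc1 : 1 < c := by
    rw [hcdef]
    exact (Real.one_lt_rpow_iff_of_pos (by norm_num)).2 (Or.inl ⟨by norm_num, by positivity⟩)
  have hc0 : (0 : ℝ) < c := by linarith
  set S := Finset.univ.erase istar with hS
  set f : ℝ → ℝ := fun z => α * z ^ (-(α + 1)) * ∏ j ∈ S, (1 - (z + lam j) ^ (-α)) with hf
  have hexp : -(α + 1) < -1 := by linarith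
  -- measurability
  have hmeas : Measurable f := by
    rw [hf]; fun_prop
  -- factor bounds on Ioi 1
  have hfac : ∀ z : ℝ, 1 ≤ z → ∀ j ∈ S, (0 : ℝ) ≤ 1 - (z + lam j) ^ (-α) ∧
      1 - (z + lam j) ^ (-α) ≤ 1 := by
    intro z hz j _
    have h1 : (1 : ℝ) ≤ z + lam j := le_add_of_le_of_nonneg hz (hlam j)
    have h2 : (z + lam j) ^ (-α) ≤ 1 :=
      Real.rpow_le_one_of_one_le_of_nonpos h1 (by linarith)
    have h3 : (0 : ℝ) ≤ (z + lam j) ^ (-α) :=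
      Real.rpow_nonneg (by linarith) _
    constructor <;> linarith
  have hprod01 : ∀ z : ℝ, 1 ≤ z →
      0 ≤ ∏ j ∈ S, (1 - (z + lam j) ^ (-α)) ∧ ∏ j ∈ S, (1 - (z + lam j) ^ (-α)) ≤ 1 := by
    intro z hz
    constructor
    · exact Finset.prod_nonneg fun j hj => (hfac z hz j hj).1
    · exact Finset.prod_le_one (fun j hj => (hfac z hz j hj).1) fun j hj => (hfac z hz j hj).2
  have hfnonneg : ∀ z : ℝ, 1 ≤ z → 0 ≤ f z := by
    intro z hz
    have hz0 : (0 : ℝ) < z := by linarith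
    exact mul_nonneg (mul_nonneg hα0.le (Real.rpow_nonneg hz0.le _)) (hprod01 z hz).1
  -- integrability of the dominating function
  have hg_int : ∀ d : ℝ, 0 < d → IntegrableOn (fun z : ℝ => α * z ^ (-(α + 1))) (Ioi d) := by
    intro d hd
    exact (integrableOn_Ioi_rpow_of_lt hexp hd).const_mul α
  have hf_int1 : IntegrableOn f (Ioi 1) := by
    apply Integrable.mono' (hg_int 1 one_pos) (hmeas.aestronglyMeasurable.restrict)
    filter_upwards [ae_restrict_mem measurableSet_Ioi] with z hz
    have hz1 : (1 : ℝ) ≤ z := le_of_lt hz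
    have hz0 : (0 : ℝ) < z := by linarith
    rw [Real.norm_eq_abs, abs_of_nonneg (hfnonneg z hz1)]
    calc f z ≤ α * z ^ (-(α + 1)) * 1 := by
          apply mul_le_mul_of_nonneg_left (hprod01 z hz1).2
          exact mul_nonneg hα0.le (Real.rpow_nonneg hz0.le _)
      _ = α * z ^ (-(α + 1)) := mul_one _
  have hf_intc : IntegrableOn f (Ioi c) :=
    hf_int1.mono_set (Ioi_subset_Ioi hc1.le)
  -- Step 1: ∫ over Ioi 1 ≥ ∫ over Ioi c
  have step1 : ∫ z in Ioi c, f z ≤ ∫ z in Ioi 1, f z := by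
    apply setIntegral_mono_set hf_int1
    · filter_upwards [ae_restrict_mem measurableSet_Ioi] with z hz
      exact hfnonneg z hz.le
    · exact HasSubset.Subset.eventuallyLE (Ioi_subset_Ioi hc1.le)
  -- Step 2: on Ioi c the product is ≥ 1/2
  have hhalf : ∀ z : ℝ, c ≤ z → (1 : ℝ) / 2 ≤ ∏ j ∈ S, (1 - (z + lam j) ^ (-α)) := by
    intro z hz
    have hz1 : (1 : ℝ) ≤ z := le_trans hc1.le hz
    have hsum_le : ∑ j ∈ S, (z + lam j) ^ (-α) ≤ 1 / 2 := by
      refine le_trans (Finset.sum_le_sum fun j _ => ?_) hD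
      exact Real.rpow_le_rpow_of_nonpos (by have := hlam j; linarith) (by linarith [hlam j]) (by linarith)
    have hW := weierstrass_prod S (fun j => (z + lam j) ^ (-α))
      (fun j _ => Real.rpow_nonneg (by linarith [hlam j]) _)
      (fun j _ => Real.rpow_le_one_of_one_le_of_nonpos (le_add_of_le_of_nonneg hz1 (hlam j)) (by linarith))
    linarith
  -- Step 3: compute ∫_{Ioi c} α z^{-(α+1)} = c^{-α} = 1/2
  have hval : ∫ z in Ioi c, α * z ^ (-(α + 1)) = 1 / 2 := by
    rw [integral_const_mul, integral_Ioi_rpow_of_lt hexp hc0]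
    have hca : c ^ (-α) = 1 / 2 := by
      rw [hcdef, ← Real.rpow_mul (by norm_num : (0:ℝ) ≤ 2),
        show 1 / α * -α = -1 by field_simp, Real.rpow_neg_one]
      norm_num
    have : -(α + 1) + 1 = -α := by ring
    rw [this, hca]
    field_simp
  -- Step 4: lower bound ∫ over Ioi c
  have step2 : (1 : ℝ) / 4 ≤ ∫ z in Ioi c, f z := by
    have hmono : ∫ z in Ioi c, (1 / 2) * (α * z ^ (-(α + 1))) ≤ ∫ z in Ioi c, f z := by
      apply setIntegral_mono_on ((hg_int c hc0).const_mul (1 / 2)) hf_intc measurableSet_Ioi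
      intro z hz
      have hz1 : (1 : ℝ) ≤ z := le_trans hc1.le hz.le
      have hz0 : (0 : ℝ) < z := by linarith
      have h1 : (1 : ℝ) / 2 ≤ ∏ j ∈ S, (1 - (z + lam j) ^ (-α)) := hhalf z hz.le
      have h2 : 0 ≤ α * z ^ (-(α + 1)) := mul_nonneg hα0.le (Real.rpow_nonneg hz0.le _)
      calc 1 / 2 * (α * z ^ (-(α + 1))) = α * z ^ (-(α + 1)) * (1 / 2) := by ring
        _ ≤ α * z ^ (-(α + 1)) * ∏ j ∈ S, (1 - (z + lam j) ^ (-α)) :=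
            mul_le_mul_of_nonneg_left h1 h2
        _ = f z := rfl
    have : ∫ z in Ioi c, (1 / 2) * (α * z ^ (-(α + 1))) = 1 / 4 := by
      rw [integral_const_mul, hval]; norm_num
    linarith
  -- Step 5: 1/(2e) ≤ 1/4
  have he : (2 : ℝ) ≤ Real.exp 1 := by
    have := Real.add_one_le_exp 1
    linarith
  have hfinal : 1 / (2 * Real.exp 1) ≤ 1 / 4 := by
    apply div_le_div_of_nonneg_left (by norm_num) (by norm_num)
    linarith
  linarith [step1, step2]
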